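/- There is a finite-to-one map f : ℕ → ℕ such that for every minimal right ideal I of (βℕ, +), the image βf(I) is a single point of ℕ*; furthermore, for every p ∈ ℕ* there is some minimal right ideal I with βf(I) = {p}. -/

import Mathlib

open Filter Set Topology

noncomputable section

/-- `βℕ`: the space of ultrafilters on `ℕ` (the Stone–Čech compactification of `ℕ`). -/
abbrev βN := Ultrafilter ℕ

/-- `ℕ* = βℕ ∖ ℕ`: the free (nonprincipal) ultrafilters, i.e. those containing
every cofinite set. -/
def NStar : Set βN := {p | (p : Filter ℕ) ≤ Filter.cofinite}

/-- The shift map `σ : βℕ → βℕ`, the pushforward under `n ↦ n + 1`. -/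
def shift (p : βN) : βN := p.map (· + 1)

/-- Addition on `βℕ`: `A ∈ p + q ↔ {n | A − n ∈ p} ∈ q`, where `A − n = {m | m + n ∈ A}`. -/
def addU (p q : βN) : βN := q.bind fun n => p.map (· + n)

/-- A right ideal of `(βℕ, +)`: `I + βℕ ⊆ I`. -/
def IsRightIdeal (I : Set βN) : Prop := ∀ p ∈ I, ∀ q : βN, addU p q ∈ I

/-- A minimal right ideal: a nonempty right ideal not properly containing any
other (nonempty) right ideal. -/
def IsMinRightIdeal (I : Set βN) : Prop :=
  I.Nonempty ∧ IsRightIdeal I ∧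
    ∀ J : Set βN, J.Nonempty → IsRightIdeal J → J ⊆ I → J = I

/-- `A* = {p ∈ ℕ* | A ∈ p}`, as a subset of the subspace `ℕ*`. -/
def starSet (A : Set ℕ) : Set ↥NStar := {p | A ∈ (p : βN)}

/-- `F* = ⋂_{A ∈ F} A*` for a (free) filter `F` on `ℕ`. -/
def filterStar (F : Filter ℕ) : Set βN := ⋂ A ∈ F, {p : βN | A ∈ p}

/-- A closed `P`-set of the space `ℕ*`: for every countable collection of open
sets containing `X`, `X` is contained in the interior of the intersection. -/
def IsPSetSub (X : Set ↥NStar) : Prop :=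
  IsClosed X ∧ ∀ 𝒜 : Set (Set ↥NStar), 𝒜.Countable →
    (∀ U ∈ 𝒜, IsOpen U ∧ X ⊆ U) → X ⊆ interior (⋂₀ 𝒜)

/-- A subset of `βℕ` which lies in `ℕ*` and is a closed `P`-set of `ℕ*`. -/
def IsPSetIn (X : Set βN) : Prop :=
  X ⊆ NStar ∧ IsPSetSub (Subtype.val ⁻¹' X)

/-- `A ⊆ ℕ` is thick if it contains arbitrarily long intervals. -/
def Thick (A : Set ℕ) : Prop := ∀ k : ℕ, ∃ n : ℕ, Set.Icc n (n + k) ⊆ A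

/-- `A ⊆* B`: `A ∖ B` is finite. -/
def almostSub (A B : Set ℕ) : Prop := (A \ B).Finite

/-- The tower number `𝔱`: the least cardinality of a `⊆*`-chain of infinite subsets
of `ℕ` with no infinite pseudo-intersection. -/
def towerNum : Cardinal :=
  sInf {c : Cardinal | ∃ C : Set (Set ℕ), c = Cardinal.mk ↥C ∧ (∀ A ∈ C, A.Infinite) ∧
    IsChain almostSub C ∧ ¬∃ B : Set ℕ, B.Infinite ∧ ∀ A ∈ C, almostSub B A}

/-- `𝔱_Θ`: the least cardinality of a `⊆*`-chain of thick subsets of `ℕ` with no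
thick `⊆*`-lower bound. -/
def towerNumTheta : Cardinal :=
  sInf {c : Cardinal | ∃ C : Set (Set ℕ), c = Cardinal.mk ↥C ∧ (∀ A ∈ C, Thick A) ∧
    IsChain almostSub C ∧ ¬∃ B : Set ℕ, Thick B ∧ ∀ A ∈ C, almostSub B A}

/-- The pseudo-intersection number `𝔭`: the least cardinality of a filter base of
infinite subsets of `ℕ` (all finite intersections infinite) with no infinite
pseudo-intersection. -/
def pNum : Cardinal :=
  sInf {c : Cardinal | ∃ C : Set (Set ℕ), c = Cardinal.mk ↥C ∧
    (∀ S : Finset (Set ℕ), ↑S ⊆ C → (⋂ A ∈ S, A : Set ℕ).Infinite) ∧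
    ¬∃ B : Set ℕ, B.Infinite ∧ ∀ A ∈ C, almostSub B A}

/-- Chain transitivity for a dynamical system on a topological space, via open
covers: for every open cover `𝒰` and all `x, y` there is a `𝒰`-chain from `x` to `y`. -/
def ChainTransitive {X : Type*} [TopologicalSpace X] (f : X → X) : Prop :=
  ∀ 𝒰 : Set (Set X), (∀ U ∈ 𝒰, IsOpen U) → ⋃₀ 𝒰 = Set.univ →
    ∀ x y : X, ∃ (n : ℕ) (c : ℕ → X), c 0 = x ∧ c n = y ∧
      ∀ i < n, ∃ U ∈ 𝒰, f (c i) ∈ U ∧ c (i + 1) ∈ U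

lemma shift_mem_NStar {p : βN} (hp : p ∈ NStar) : shift p ∈ NStar := by
  have h1 : Filter.Tendsto (· + 1) Filter.cofinite Filter.cofinite :=
    Function.Injective.tendsto_cofinite (add_left_injective 1)
  simp only [NStar, Set.mem_setOf_eq, shift, Ultrafilter.coe_map] at *
  exact (Filter.map_mono hp).trans h1

/-- The shift map restricted to `ℕ*`. -/
def shiftStar (p : ↥NStar) : ↥NStar := ⟨shift p.1, shift_mem_NStar p.2⟩

namespace Stmt7Aux


lemma mem_addU {p q : βN} {A : Set ℕ} :
    A ∈ addU p q ↔ {n | {m | m + n ∈ A} ∈ p} ∈ q := by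
  change A ∈ Filter.bind (q : Filter ℕ) (fun n => ((p.map (· + n) : βN) : Filter ℕ)) ↔ _
  rw [Filter.mem_bind']
  simp only [Ultrafilter.mem_coe, Ultrafilter.mem_map]
  rfl

lemma addU_assoc (p q r : βN) : addU (addU p q) r = addU p (addU q r) := by
  ext A
  simp only [mem_addU, Set.mem_setOf_eq, add_assoc]

lemma addU_pure (p : βN) (n : ℕ) : addU p (pure n) = p.map (· + n) := by
  ext A
  simp only [mem_addU, Ultrafilter.mem_pure, Ultrafilter.mem_map, Set.mem_setOf_eq]
  rfl


lemma addU_free_left {p : βN} (hp : p ∈ NStar) (q : βN) : addU p q ∈ NStar := by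
  intro A hA
  rw [Ultrafilter.mem_coe, mem_addU]
  have : {n | {m | m + n ∈ A} ∈ p} = Set.univ := by
    ext n
    simp only [Set.mem_setOf_eq, Set.mem_univ, iff_true]
    apply hp
    rw [Filter.mem_cofinite]
    have : {m | m + n ∈ A}ᶜ = (· + n) ⁻¹' Aᶜ := rfl
    rw [this]
    exact (Filter.mem_cofinite.mp hA).preimage (add_left_injective n).injOn
  rw [this]
  exact Filter.univ_mem

lemma addU_free_right {q : βN} (hq : q ∈ NStar) (p : βN) : addU p q ∈ NStar := by
  intro A hA
  rw [Ultrafilter.mem_coe, mem_addU]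
  rw [Filter.mem_cofinite] at hA
  obtain ⟨N, hN⟩ := hA.bddAbove
  have hsub : {n | N < n} ⊆ {n | {m | m + n ∈ A} ∈ p} := by
    intro n hn
    have : {m | m + n ∈ A} = Set.univ := by
      ext m
      simp only [Set.mem_setOf_eq, Set.mem_univ, iff_true]
      by_contra hmA
      have h1 : m + n ≤ N := hN hmA
      have h2 : N < n := hn
      omega
    show {m | m + n ∈ A} ∈ p
    rw [this]
    exact Filter.univ_mem
  apply Filter.mem_of_superset _ hsub
  apply hq
  rw [Filter.mem_cofinite]
  have : {n : ℕ | N < n}ᶜ = Set.Iic N := by ext n; simp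
  rw [this]
  exact Set.finite_Iic N

lemma orbit_rightIdeal (u : βN) : IsRightIdeal ((fun r => addU u r) '' Set.univ) := by
  rintro _ ⟨r, -, rfl⟩ s
  exact ⟨addU r s, Set.mem_univ _, (addU_assoc u r s).symm⟩

lemma orbit_eq {I : Set βN} (hI : IsMinRightIdeal I) {u : βN} (hu : u ∈ I) :
    (fun r => addU u r) '' Set.univ = I := by
  refine hI.2.2 _ ⟨addU u u, ⟨u, Set.mem_univ _, rfl⟩⟩ (orbit_rightIdeal u) ?_
  rintro _ ⟨r, -, rfl⟩
  exact hI.2.1 u hu r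

lemma mem_NStar_of_mem_min {I : Set βN} (hI : IsMinRightIdeal I) {w : βN} (hw : w ∈ I) :
    w ∈ NStar := by
  have hhyp : (Filter.hyperfilter ℕ : βN) ∈ NStar := Filter.hyperfilter_le_cofinite
  set w₀ : βN := addU w (Filter.hyperfilter ℕ) with hw₀
  have hw₀I : w₀ ∈ I := hI.2.1 w hw _
  have hw₀free : w₀ ∈ NStar := addU_free_right hhyp w
  have h2 : w ∈ (fun r => addU w₀ r) '' Set.univ := by
    rw [orbit_eq hI hw₀I]; exact hw
  obtain ⟨s, -, hs⟩ := h2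
  rw [← hs]
  exact addU_free_left hw₀free s

/-- The set of "boundary" points where `Nat.sqrt` jumps. -/
def Dset : Set ℕ := {m | Nat.sqrt (m + 1) ≠ Nat.sqrt m}

lemma sq_of_mem_D {m : ℕ} (hm : m ∈ Dset) :
    Nat.sqrt (m + 1) * Nat.sqrt (m + 1) = m + 1 := by
  have h1 : Nat.sqrt m ≤ Nat.sqrt (m + 1) := Nat.sqrt_le_sqrt (by omega)
  have h2 : Nat.sqrt m < Nat.sqrt (m + 1) := lt_of_le_of_ne h1 (Ne.symm hm)
  have h3 : m < Nat.sqrt (m + 1) * Nat.sqrt (m + 1) := Nat.sqrt_lt.mp h2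
  have h4 : Nat.sqrt (m + 1) * Nat.sqrt (m + 1) ≤ m + 1 := Nat.sqrt_le (m + 1)
  omega

lemma exists_two_of_infinite {F : Set ℕ} (hF : F.Infinite) :
    ∃ k₁ ∈ F, ∃ k₂ ∈ F, k₁ < k₂ := by
  obtain ⟨k₁, hk₁⟩ := hF.nonempty
  by_contra h
  push_neg at h
  exact hF (Set.Finite.subset (Set.finite_Iic k₁) (fun x hx => h k₁ hk₁ x hx))

lemma D_not_mem {I : Set βN} (hI : IsMinRightIdeal I) {w : βN} (hw : w ∈ I) :
    Dset ∉ w := by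
  intro hD
  have wfree : w ∈ NStar := mem_NStar_of_mem_min hI hw
  set E : Set ℕ := {n | {m | m + n ∈ Dset} ∈ w} with hE
  -- find two elements of E
  set r : βN := (Filter.hyperfilter ℕ : βN) with hr
  have hwr : addU w r ∈ I := hI.2.1 w hw r
  have h2 : w ∈ (fun s => addU (addU w r) s) '' Set.univ := by
    rw [orbit_eq hI hwr]; exact hw
  obtain ⟨s, -, hs⟩ := h2
  have hws : w = addU w (addU r s) := by rw [← addU_assoc]; exact hs.symm
  have hEt : E ∈ addU r s := by
    rw [hws] at hD
    exact mem_addU.mp hD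
  rw [mem_addU] at hEt
  obtain ⟨m, hm⟩ := Ultrafilter.nonempty_of_mem hEt
  have hFinf : {k | k + m ∈ E}.Infinite := by
    by_contra hfin
    rw [Set.not_infinite] at hfin
    exact hfin.notMem_hyperfilter hm
  obtain ⟨k₁, hk₁, k₂, hk₂, hklt⟩ := exists_two_of_infinite hFinf
  set n₁ := k₁ + m with hn₁
  set n₂ := k₂ + m with hn₂
  have hn₁E : {m' | m' + n₁ ∈ Dset} ∈ w := hk₁
  have hn₂E : {m' | m' + n₂ ∈ Dset} ∈ w := hk₂
  set d := n₂ - n₁ with hd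
  have hdpos : 0 < d := by omega
  -- large elements
  have hlarge : {m' | d * d < m'} ∈ w := by
    apply wfree
    rw [Filter.mem_cofinite]
    have : {m' : ℕ | d * d < m'}ᶜ = Set.Iic (d * d) := by ext x; simp
    rw [this]; exact Set.finite_Iic _
  have hmem : ({m' | m' + n₁ ∈ Dset} ∩ {m' | m' + n₂ ∈ Dset} ∩ {m' | d * d < m'}) ∈ w :=
    Filter.inter_mem (Filter.inter_mem hn₁E hn₂E) hlarge
  obtain ⟨m', ⟨⟨hD₁, hD₂⟩, hm'⟩⟩ := Ultrafilter.nonempty_of_mem hmem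
  have hm2 : d * d < m' := hm'
  set j := Nat.sqrt (m' + n₁ + 1) with hj
  set k := Nat.sqrt (m' + n₂ + 1) with hk
  have hj2 : j * j = m' + n₁ + 1 := sq_of_mem_D hD₁
  have hk2 : k * k = m' + n₂ + 1 := sq_of_mem_D hD₂
  have hkk : k * k = j * j + d := by rw [hj2, hk2]; omega
  have hjd : d < j := by
    have : d * d < j * j := by omega
    exact Nat.mul_self_lt_mul_self_iff.mp this
  have hjk : j < k := by
    have : j * j < k * k := by omega
    exact Nat.mul_self_lt_mul_self_iff.mp this
  have : (j + 1) * (j + 1) ≤ k * k := Nat.mul_le_mul (by omega) (by omega)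
  nlinarith [hjd, hkk, this]

lemma key_shift {I : Set βN} (hI : IsMinRightIdeal I) {w : βN} (hw : w ∈ I) (S : Set ℕ) :
    ∀ n : ℕ, ({m | m + n ∈ Nat.sqrt ⁻¹' S} ∈ w ↔ Nat.sqrt ⁻¹' S ∈ w) := by
  intro n
  induction n with
  | zero => simp only [add_zero, Set.setOf_mem_eq]
  | succ n ih =>
    rw [← ih]
    have hwn : addU w (pure n) ∈ I := hI.2.1 w hw _
    have hDn : Dset ∉ addU w (pure n) := D_not_mem hI hwn
    rw [addU_pure, Ultrafilter.mem_map] at hDn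
    have hC : {m | m + n ∉ Dset} ∈ w := by
      have := Ultrafilter.compl_mem_iff_notMem.mpr hDn
      exact this
    have heq : {m | m + (n + 1) ∈ Nat.sqrt ⁻¹' S} ∩ {m | m + n ∉ Dset}
        = {m | m + n ∈ Nat.sqrt ⁻¹' S} ∩ {m | m + n ∉ Dset} := by
      ext m
      simp only [Set.mem_inter_iff, Set.mem_setOf_eq, Set.mem_preimage, Dset,
        Set.mem_setOf_eq, not_not, ne_eq, not_not]
      have h3 : m + (n + 1) = m + n + 1 := by ring
      constructor
      · rintro ⟨h1, h2⟩
        rw [h3] at h1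
        refine ⟨?_, h2⟩
        rw [← h2]
        exact h1
      · rintro ⟨h1, h2⟩
        refine ⟨?_, h2⟩
        rw [h3, h2]
        exact h1
    constructor
    · intro h
      have := Filter.inter_mem h hC
      rw [heq] at this
      exact Filter.mem_of_superset this Set.inter_subset_left
    · intro h
      have := Filter.inter_mem h hC
      rw [← heq] at this
      exact Filter.mem_of_superset this Set.inter_subset_left

lemma collapse {I : Set βN} (hI : IsMinRightIdeal I) {w : βN} (hw : w ∈ I) (q : βN) :
    Ultrafilter.map Nat.sqrt (addU w q) = Ultrafilter.map Nat.sqrt w := by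
  ext S
  rw [Ultrafilter.mem_map, Ultrafilter.mem_map, mem_addU]
  by_cases h : Nat.sqrt ⁻¹' S ∈ w
  · have : {n | {m | m + n ∈ Nat.sqrt ⁻¹' S} ∈ w} = Set.univ := by
      ext n
      simp only [Set.mem_setOf_eq, Set.mem_univ, iff_true]
      exact (key_shift hI hw S n).mpr h
    rw [this]
    exact iff_of_true Filter.univ_mem h
  · have : {n | {m | m + n ∈ Nat.sqrt ⁻¹' S} ∈ w} = ∅ := by
      ext n
      simp only [Set.mem_setOf_eq, Set.mem_empty_iff_false, iff_false]
      intro hc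
      exact h ((key_shift hI hw S n).mp hc)
    rw [this]
    exact iff_of_false (Filter.empty_notMem _) h

lemma continuous_addU (u : βN) : Continuous (addU u) := by
  have htop : (Ultrafilter.topologicalSpace : TopologicalSpace βN)
      = TopologicalSpace.generateFrom (ultrafilterBasis ℕ) := rfl
  apply continuous_generateFrom_iff.mpr
  rintro _ ⟨A, rfl⟩
  have : (addU u) ⁻¹' {v | A ∈ v} = {q | {n | {m | m + n ∈ A} ∈ u} ∈ q} := by
    ext q
    simp only [Set.mem_preimage, Set.mem_setOf_eq, mem_addU]
  rw [this]
  exact ultrafilter_isOpen_basic _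

lemma exists_min_in_orbit (u : βN) :
    ∃ M : Set βN, IsMinRightIdeal M ∧ M ⊆ (fun r => addU u r) '' Set.univ := by
  set R : Set βN := (fun r => addU u r) '' Set.univ with hR
  have hRcl : IsClosed R := (isCompact_univ.image (continuous_addU u)).isClosed
  have hRne : R.Nonempty := ⟨addU u u, u, Set.mem_univ _, rfl⟩
  set 𝒮 : Set (Set βN) :=
    {J | J ⊆ R ∧ J.Nonempty ∧ IsClosed J ∧ IsRightIdeal J} with h𝒮
  have hR𝒮 : R ∈ 𝒮 := ⟨le_refl _, hRne, hRcl, orbit_rightIdeal u⟩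
  have hzorn : ∀ c ⊆ 𝒮, IsChain (· ⊆ ·) c → c.Nonempty →
      ∃ lb ∈ 𝒮, ∀ s ∈ c, lb ⊆ s := by
    intro c hc𝒮 hchain hcne
    refine ⟨⋂₀ c, ⟨?_, ?_, ?_, ?_⟩, fun s hs => Set.sInter_subset_of_mem hs⟩
    · obtain ⟨s, hs⟩ := hcne
      exact (Set.sInter_subset_of_mem hs).trans (hc𝒮 hs).1
    · haveI : Nonempty c := hcne.to_subtype
      apply IsCompact.nonempty_sInter_of_directed_nonempty_isCompact_isClosed
      · intro x hx y hy
        rcases hchain.total hx hy with h | h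
        · exact ⟨x, hx, subset_rfl, h⟩
        · exact ⟨y, hy, h, subset_rfl⟩
      · exact fun U hU => (hc𝒮 hU).2.1
      · exact fun U hU => (hc𝒮 hU).2.2.1.isCompact
      · exact fun U hU => (hc𝒮 hU).2.2.1
    · exact isClosed_sInter (fun U hU => (hc𝒮 hU).2.2.1)
    · intro p hp q
      rw [Set.mem_sInter] at hp ⊢
      exact fun U hU => (hc𝒮 hU).2.2.2 p (hp U hU) q
  obtain ⟨M, -, hM⟩ := zorn_superset_nonempty 𝒮 hzorn R hR𝒮
  · obtain ⟨hMR, hMne, hMcl, hMri⟩ := hM.prop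
    refine ⟨M, ⟨hMne, hMri, ?_⟩, hMR⟩
    intro J hJne hJri hJM
    obtain ⟨v, hv⟩ := hJne
    set J' : Set βN := (fun r => addU v r) '' Set.univ with hJ'
    have hJ'J : J' ⊆ J := by
      rintro _ ⟨r, -, rfl⟩
      exact hJri v hv r
    have hJ'𝒮 : J' ∈ 𝒮 := by
      refine ⟨(hJ'J.trans hJM).trans hMR, ⟨addU v v, v, Set.mem_univ _, rfl⟩,
        (isCompact_univ.image (continuous_addU v)).isClosed, orbit_rightIdeal v⟩
    have : M ⊆ J' := hM.le_of_le hJ'𝒮 ((hJ'J.trans hJM))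
    exact le_antisymm hJM (this.trans hJ'J)

lemma map_sqrt_free {w : βN} (hw : w ∈ NStar) : Ultrafilter.map Nat.sqrt w ∈ NStar := by
  intro A hA
  rw [Ultrafilter.mem_coe, Ultrafilter.mem_map]
  apply hw
  rw [Filter.mem_cofinite] at hA ⊢
  obtain ⟨N, hN⟩ := hA.bddAbove
  have : (Nat.sqrt ⁻¹' A)ᶜ ⊆ Set.Iic ((N + 1) * (N + 1)) := by
    intro m hm
    have h1 : Nat.sqrt m ∈ Aᶜ := hm
    have h2 : Nat.sqrt m ≤ N := hN h1
    have h3 : Nat.sqrt m < N + 1 := by omega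
    have := Nat.sqrt_lt.mp h3
    simp only [Set.mem_Iic]
    omega
  exact Set.Finite.subset (Set.finite_Iic _) this

theorem stmt7' : ∃ f : ℕ → ℕ, (∀ n : ℕ, (f ⁻¹' {n}).Finite) ∧
    (∀ I : Set βN, IsMinRightIdeal I →
      ∃ p : βN, p ∈ NStar ∧ Ultrafilter.map f '' I = {p}) ∧
    (∀ p : βN, p ∈ NStar →
      ∃ I : Set βN, IsMinRightIdeal I ∧ Ultrafilter.map f '' I = {p}) := by
  refine ⟨Nat.sqrt, ?_, ?_, ?_⟩
  · -- finite-to-one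
    intro n
    apply Set.Finite.subset (Set.finite_Iic ((n + 1) * (n + 1)))
    intro m hm
    have h1 : Nat.sqrt m = n := hm
    have h2 : m < (n + 1) * (n + 1) := Nat.sqrt_lt.mp (by omega)
    simp only [Set.mem_Iic]
    omega
  · -- every minimal right ideal collapses
    intro I hI
    obtain ⟨u, hu⟩ := hI.1
    refine ⟨Ultrafilter.map Nat.sqrt u, map_sqrt_free (mem_NStar_of_mem_min hI hu), ?_⟩
    apply Set.eq_singleton_iff_unique_mem.mpr
    constructor
    · exact ⟨u, hu, rfl⟩
    · rintro _ ⟨w, hwI, rfl⟩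
      have hmem : w ∈ (fun r => addU u r) '' Set.univ := by
        rw [orbit_eq hI hu]; exact hwI
      obtain ⟨r, -, hr⟩ := hmem
      rw [← hr]
      exact collapse hI hu r
  · -- surjectivity
    intro p hp
    set u : βN := Ultrafilter.map (fun k => k * k + k) p with hu
    have hkey : ∀ A ∈ p, ∀ n : ℕ, {m | Nat.sqrt (m + n) ∈ A} ∈ u := by
      intro A hA n
      rw [hu, Ultrafilter.mem_map]
      have hsub : A ∩ {k | n ≤ k} ⊆ (fun k => k * k + k) ⁻¹' {m | Nat.sqrt (m + n) ∈ A} := by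
        rintro k ⟨hkA, hkn⟩
        have hkn' : n ≤ k := hkn
        have heq : k * k + k + n = k * k + (k + n) := by ring
        have hsq : Nat.sqrt (k * k + (k + n)) = k := Nat.sqrt_add_eq k (by omega)
        show Nat.sqrt (k * k + k + n) ∈ A
        rw [heq, hsq]
        exact hkA
      apply Filter.mem_of_superset _ hsub
      apply Filter.inter_mem hA
      apply hp
      rw [Filter.mem_cofinite]
      apply Set.Finite.subset (Set.finite_Iic n)
      intro x hx
      simp only [Set.mem_compl_iff, Set.mem_setOf_eq, not_le] at hx
      simp only [Set.mem_Iic]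
      omega
    obtain ⟨M, hMmin, hMsub⟩ := exists_min_in_orbit u
    refine ⟨M, hMmin, ?_⟩
    have hall : ∀ w ∈ M, Ultrafilter.map Nat.sqrt w = p := by
      intro w hwM
      obtain ⟨r, -, hr⟩ := hMsub hwM
      have hfwd : ∀ A ∈ p, A ∈ Ultrafilter.map Nat.sqrt w := by
        intro A hA
        rw [Ultrafilter.mem_map, ← hr]
        rw [mem_addU]
        have : {n | {m | m + n ∈ Nat.sqrt ⁻¹' A} ∈ u} = Set.univ := by
          ext n
          simp only [Set.mem_setOf_eq, Set.mem_univ, iff_true]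
          exact hkey A hA n
        rw [this]
        exact Filter.univ_mem
      ext A
      constructor
      · intro hA
        by_contra hAp
        have := hfwd Aᶜ (Ultrafilter.compl_mem_iff_notMem.mpr hAp)
        exact (Ultrafilter.compl_mem_iff_notMem.mp this) hA
      · exact hfwd A
    apply Set.eq_singleton_iff_unique_mem.mpr
    obtain ⟨w₀, hw₀⟩ := hMmin.1
    exact ⟨⟨w₀, hw₀, hall w₀ hw₀⟩, by rintro _ ⟨w, hwM, rfl⟩; exact hall w hwM⟩

end Stmt7Aux

/-- There is a finite-to-one `f : ℕ → ℕ` such that `βf` collapses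
every minimal right ideal of `(βℕ, +)` to a single point of `ℕ*`; moreover every
point of `ℕ*` arises this way from some minimal right ideal. -/
theorem stmt7 : ∃ f : ℕ → ℕ, (∀ n : ℕ, (f ⁻¹' {n}).Finite) ∧
    (∀ I : Set βN, IsMinRightIdeal I →
      ∃ p : βN, p ∈ NStar ∧ Ultrafilter.map f '' I = {p}) ∧
    (∀ p : βN, p ∈ NStar →
      ∃ I : Set βN, IsMinRightIdeal I ∧ Ultrafilter.map f '' I = {p}) := by
  exact Stmt7Aux.stmt7'

end
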